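/- (Stone–von Neumann theorem for the finite Heisenberg group.) Let H be a nonzero complex Hilbert space and let ρ : H(ℤ_N^g) → U(H) be a unitary representation such that ρ(class of (0,0,1)) = e^{πi/N}·id_H and such that ρ is irreducible, i.e., the only closed subspaces of H invariant under ρ(u) for all u ∈ H(ℤ_N^g) are {0} and H. Then ρ is unitarily equivalent to the Schrödinger representation: there exists a unitary isomorphism U : H → V such that U ∘ ρ(u) ∘ U⁻¹ = σ̄(u) for all u ∈ H(ℤ_N^g), where σ̄ : H(ℤ_N^g) → U(V) is the Schrödinger representation, i.e., the homomorphism induced on the quotient H(ℤ_N^g) = H(ℤ^g)/Γ_N by (p,q,k) ↦ e^{kπi/N} O_{pq}. -/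

import Mathlib

open Finset

/-- The underlying `ℤ^g × ℤ^g` of the Heisenberg group. -/
abbrev HVec (g : ℕ) := (Fin g → ℤ) × (Fin g → ℤ)

/-- The standard symplectic form `ω((p,q),(p',q')) = Σⱼ (pⱼ q'ⱼ − qⱼ p'ⱼ)`. -/
def symp (g : ℕ) (x y : HVec g) : ℤ := ∑ j, (x.1 j * y.2 j - x.2 j * y.1 j)

lemma symp_add_left (g : ℕ) (x y z : HVec g) :
    symp g (x + y) z = symp g x z + symp g y z := by
  simp only [symp, Prod.fst_add, Prod.snd_add, Pi.add_apply]
  rw [← Finset.sum_add_distrib]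
  exact Finset.sum_congr rfl fun j _ => by ring

lemma symp_add_right (g : ℕ) (x y z : HVec g) :
    symp g x (y + z) = symp g x y + symp g x z := by
  simp only [symp, Prod.fst_add, Prod.snd_add, Pi.add_apply]
  rw [← Finset.sum_add_distrib]
  exact Finset.sum_congr rfl fun j _ => by ring

lemma symp_zero_left (g : ℕ) (y : HVec g) : symp g 0 y = 0 := by
  simp [symp]

lemma symp_zero_right (g : ℕ) (x : HVec g) : symp g x 0 = 0 := by
  simp [symp]

lemma symp_neg_left (g : ℕ) (x y : HVec g) : symp g (-x) y = - symp g x y := by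
  simp only [symp, Prod.fst_neg, Prod.snd_neg, Pi.neg_apply, ← Finset.sum_neg_distrib]
  exact Finset.sum_congr rfl fun j _ => by ring

lemma symp_neg_right (g : ℕ) (x y : HVec g) : symp g x (-y) = - symp g x y := by
  simp only [symp, Prod.fst_neg, Prod.snd_neg, Pi.neg_apply, ← Finset.sum_neg_distrib]
  exact Finset.sum_congr rfl fun j _ => by ring

lemma symp_self (g : ℕ) (x : HVec g) : symp g x x = 0 :=
  Finset.sum_eq_zero fun j _ => by ring

lemma symp_skew (g : ℕ) (x y : HVec g) : symp g x y = - symp g y x := by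
  simp only [symp, ← Finset.sum_neg_distrib]
  exact Finset.sum_congr rfl fun j _ => by ring

lemma symp_smul_left (g : ℕ) (c : ℤ) (x y : HVec g) :
    symp g (c • x) y = c * symp g x y := by
  simp only [symp, Prod.smul_fst, Prod.smul_snd, Pi.smul_apply, smul_eq_mul, Finset.mul_sum]
  exact Finset.sum_congr rfl fun j _ => by ring

lemma symp_smul_right (g : ℕ) (c : ℤ) (x y : HVec g) :
    symp g x (c • y) = c * symp g x y := by
  simp only [symp, Prod.smul_fst, Prod.smul_snd, Pi.smul_apply, smul_eq_mul, Finset.mul_sum]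
  exact Finset.sum_congr rfl fun j _ => by ring

/-- The integral Heisenberg group `H(ℤ^g) = ℤ^g × ℤ^g × ℤ`. -/
def Heis (g : ℕ) := HVec g × ℤ

namespace Heis

variable {g : ℕ}

instance : Mul (Heis g) := ⟨fun a b => (a.1 + b.1, a.2 + b.2 + symp g a.1 b.1)⟩
instance : One (Heis g) := ⟨((0 : HVec g), (0 : ℤ))⟩
instance : Inv (Heis g) := ⟨fun a => (-a.1, -a.2)⟩

lemma mul_def (a b : Heis g) : a * b = (a.1 + b.1, a.2 + b.2 + symp g a.1 b.1) := rfl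
lemma one_def : (1 : Heis g) = ((0 : HVec g), (0 : ℤ)) := rfl
lemma inv_def (a : Heis g) : a⁻¹ = (-a.1, -a.2) := rfl

instance : Group (Heis g) where
  mul_assoc a b c := by
    show ((a.1 + b.1) + c.1, (a.2 + b.2 + symp g a.1 b.1) + c.2 + symp g (a.1 + b.1) c.1)
      = (a.1 + (b.1 + c.1), a.2 + (b.2 + c.2 + symp g b.1 c.1) + symp g a.1 (b.1 + c.1))
    refine Prod.ext ?_ ?_
    · exact add_assoc _ _ _
    · simp only [symp_add_left, symp_add_right]
      ring
  one_mul a := by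
    show ((0 : HVec g) + a.1, (0 : ℤ) + a.2 + symp g 0 a.1) = a
    rw [symp_zero_left]
    exact Prod.ext (zero_add _) (by simp)
  mul_one a := by
    show (a.1 + (0 : HVec g), a.2 + (0 : ℤ) + symp g a.1 0) = a
    rw [symp_zero_right]
    exact Prod.ext (add_zero _) (by simp)
  inv_mul_cancel a := by
    show (-a.1 + a.1, -a.2 + a.2 + symp g (-a.1) a.1) = ((0 : HVec g), (0 : ℤ))
    rw [symp_neg_left, symp_self]
    simp

end Heis

/-- The normal subgroup `Γ_N = {(Np, Nq, 2Nk)}` of `H(ℤ^g)`. -/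
def GammaN (g N : ℕ) (hN : Even N) : Subgroup (Heis g) where
  carrier := {a | (∃ x : HVec g, a.1 = (N : ℤ) • x) ∧ ∃ k : ℤ, a.2 = 2 * N * k}
  one_mem' := ⟨⟨0, by simp [Heis.one_def]⟩, 0, by simp [Heis.one_def]⟩
  mul_mem' := by
    rintro a b ⟨⟨x, hx⟩, k, hk⟩ ⟨⟨y, hy⟩, l, hl⟩
    obtain ⟨m, hm⟩ := hN
    have hNm : (N : ℤ) = m + m := by exact_mod_cast hm
    refine ⟨⟨x + y, ?_⟩, k + l + m * symp g x y, ?_⟩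
    · simp [Heis.mul_def, hx, hy, smul_add]
    · simp only [Heis.mul_def, hx, hy, hk, hl, symp_smul_left, symp_smul_right]
      rw [hNm]; ring
  inv_mem' := by
    rintro a ⟨⟨x, hx⟩, k, hk⟩
    exact ⟨⟨-x, by simp [Heis.inv_def, hx]⟩, -k, by simp [Heis.inv_def, hk]⟩

instance gammaN_normal (g N : ℕ) (hN : Even N) : (GammaN g N hN).Normal := by
  constructor
  intro n hn x
  obtain ⟨⟨y, hy⟩, k, hk⟩ := hn
  refine ⟨⟨y, ?_⟩, k + symp g x.1 y, ?_⟩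
  · show x.1 + n.1 + -x.1 = (N : ℤ) • y
    rw [hy]; abel
  · show x.2 + n.2 + symp g x.1 n.1 + -x.2 + symp g (x.1 + n.1) (-x.1) = 2 * N * (k + symp g x.1 y)
    simp only [hy, hk, symp_add_left, symp_neg_right, symp_self,
      symp_smul_left, symp_smul_right]
    have h1 : symp g y x.1 = - symp g x.1 y := symp_skew g y x.1
    rw [h1]; ring

noncomputable section

/-- The Hilbert space `V` of functions `(ℤ_N)^g → ℂ` with its standard inner product. -/
abbrev ThetaSp (g N : ℕ) [NeZero N] := EuclideanSpace ℂ (Fin g → ZMod N)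

/-- The standard orthonormal basis `(e_μ)` of `V`, `μ ∈ (ℤ_N)^g`,
with `e_μ = EuclideanSpace.single μ 1`. -/
def thetaBasis (g N : ℕ) [NeZero N] : Module.Basis (Fin g → ZMod N) ℂ (ThetaSp g N) :=
  (EuclideanSpace.basisFun (Fin g → ZMod N) ℂ).toBasis

/-- The coefficient `exp(−(πi/N) pᵀq − (2πi/N) μᵀq)`, where `μᵀq` is computed using the
canonical lift `ZMod.val` of `μ` to `ℤ^g`. -/
def schCoeff (g N : ℕ) [NeZero N] (p q : Fin g → ℤ) (μ : Fin g → ZMod N) : ℂ :=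
  Complex.exp (-((Real.pi : ℂ) * Complex.I / N) * (∑ j, (p j : ℂ) * (q j : ℂ))
    - (2 * (Real.pi : ℂ) * Complex.I / N) * (∑ j, ((μ j).val : ℂ) * (q j : ℂ)))

/-- The operator `O_{pq}` on `V`, determined by its action on the standard basis:
`O_{pq} e_μ = exp(−(πi/N) pᵀq − (2πi/N) μᵀq) • e_{μ+p}`. -/
def Opq (g N : ℕ) [NeZero N] (p q : Fin g → ℤ) : ThetaSp g N →L[ℂ] ThetaSp g N :=
  LinearMap.toContinuousLinearMap <|
    (thetaBasis g N).constr ℂ fun μ =>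
      schCoeff g N p q μ • EuclideanSpace.single (μ + fun j => ((p j : ZMod N))) (1 : ℂ)


namespace SvN

open Complex

/-! ### Scalar character lemmas -/

/-- `ec N m = exp(m π i / N)`. -/
def ec (N : ℕ) (m : ℤ) : ℂ := Complex.exp ((m : ℂ) * (Real.pi : ℂ) * Complex.I / N)

lemma ec_add (N : ℕ) (m n : ℤ) : ec N (m + n) = ec N m * ec N n := by
  rw [ec, ec, ec, ← Complex.exp_add]; congr 1; push_cast; ring

lemma ec_zero (N : ℕ) : ec N 0 = 1 := by simp [ec]

lemma ec_ne_zero (N : ℕ) (m : ℤ) : ec N m ≠ 0 := Complex.exp_ne_zero _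

lemma ec_twoN (N : ℕ) [NeZero N] (t : ℤ) : ec N (2 * N * t) = 1 := by
  have hN : (N : ℂ) ≠ 0 := Nat.cast_ne_zero.mpr (NeZero.ne N)
  rw [ec, show ((((2 * N * t : ℤ)) : ℂ) * (Real.pi : ℂ) * Complex.I / N)
      = t * (2 * (Real.pi : ℂ) * Complex.I) by push_cast; field_simp]
  exact Complex.exp_int_mul_two_pi_mul_I t

lemma ec_two_congr (N : ℕ) [NeZero N] {m n : ℤ} (h : ((m : ZMod N) = (n : ZMod N))) :
    ec N (2 * m) = ec N (2 * n) := by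
  obtain ⟨t, ht⟩ : (N : ℤ) ∣ (m - n) := by
    rwa [← ZMod.intCast_zmod_eq_zero_iff_dvd, Int.cast_sub, sub_eq_zero]
  have hm : 2 * m = 2 * n + 2 * N * t := by linear_combination 2 * ht
  rw [hm, ec_add, ec_twoN, mul_one]

lemma ec_conj (N : ℕ) (m : ℤ) : starRingEnd ℂ (ec N m) = ec N (-m) := by
  rw [ec, ec, ← Complex.exp_conj]
  congr 1
  simp only [map_div₀, map_mul, Complex.conj_I, Complex.conj_ofReal, map_intCast, map_natCast]
  push_cast
  ring

lemma ec_sum (N : ℕ) {ι : Type*} (s : Finset ι) (f : ι → ℤ) :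
    ec N (∑ i ∈ s, f i) = ∏ i ∈ s, ec N (f i) := by
  simp only [ec]
  rw [← Complex.exp_sum]
  congr 1
  push_cast
  rw [Finset.sum_mul, Finset.sum_mul, Finset.sum_div]

lemma ec_eq_one_iff (N : ℕ) [NeZero N] (m : ℤ) : ec N m = 1 ↔ ∃ t : ℤ, m = 2 * N * t := by
  have hN : (N : ℂ) ≠ 0 := Nat.cast_ne_zero.mpr (NeZero.ne N)
  have hpi : (Real.pi : ℂ) ≠ 0 := by
    exact_mod_cast Complex.ofReal_ne_zero.mpr Real.pi_ne_zero
  rw [ec, Complex.exp_eq_one_iff]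
  constructor
  · rintro ⟨n, hn⟩
    refine ⟨n, ?_⟩
    have h2 : (m : ℂ) = 2 * N * n := by
      field_simp at hn
      have hI := Complex.I_ne_zero
      have : (m : ℂ) * (Real.pi : ℂ) * Complex.I = (2 * N * n) * ((Real.pi : ℂ)) * Complex.I := by
        rw [hn]; ring
      have := mul_right_cancel₀ hI this
      exact mul_right_cancel₀ hpi this
    exact_mod_cast h2
  · rintro ⟨t, rfl⟩
    refine ⟨t, ?_⟩
    push_cast
    field_simp

end SvN

namespace SvN

/-! ### Dot products and lifts -/

def dotZ {g : ℕ} (p q : Fin g → ℤ) : ℤ := ∑ j, p j * q j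

def liftv {g N : ℕ} (μ : Fin g → ZMod N) : Fin g → ℤ := fun j => ((μ j).val : ℤ)

def castv {g : ℕ} (N : ℕ) (p : Fin g → ℤ) : Fin g → ZMod N := fun j => ((p j : ZMod N))

lemma castv_liftv {g N : ℕ} [NeZero N] (μ : Fin g → ZMod N) : castv N (liftv μ) = μ := by
  funext j
  simp only [castv, liftv, Int.cast_natCast]
  exact ZMod.natCast_rightInverse (μ j)

lemma cast_liftv {g N : ℕ} [NeZero N] (μ : Fin g → ZMod N) (j : Fin g) :
    ((liftv μ j : ℤ) : ZMod N) = μ j := congrFun (castv_liftv μ) j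

lemma dotZ_cast {g N : ℕ} (p q : Fin g → ℤ) :
    ((dotZ p q : ℤ) : ZMod N) = ∑ j, (p j : ZMod N) * (q j : ZMod N) := by
  simp [dotZ]

lemma liftv_zero {g N : ℕ} [NeZero N] : liftv (0 : Fin g → ZMod N) = 0 := by
  funext j; simp [liftv]

/-- Orthogonality of characters of `ZMod N`. -/
lemma char_sum_single (N : ℕ) [NeZero N] (x : ZMod N) :
    ∑ b : ZMod N, ec N (2 * (b.val : ℤ) * (x.val : ℤ)) = if x = 0 then (N : ℂ) else 0 := by
  have key : ∀ b : ZMod N, ec N (2 * (b.val : ℤ) * (x.val : ℤ))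
      = (ec N (2 * (x.val : ℤ))) ^ (b.val) := by
    intro b
    rw [ec, ec, ← Complex.exp_nat_mul]
    congr 1
    push_cast
    ring
  simp only [key]
  have hsum : ∑ b : ZMod N, (ec N (2 * (x.val : ℤ))) ^ (b.val)
      = ∑ n ∈ Finset.range N, (ec N (2 * (x.val : ℤ))) ^ n := by
    refine Finset.sum_nbij' (fun b => b.val) (fun n => (n : ZMod N)) ?_ ?_ ?_ ?_ ?_
    · intro b _; exact Finset.mem_range.mpr (ZMod.val_lt b)
    · intro n _; exact Finset.mem_univ _
    · intro b _; exact ZMod.natCast_rightInverse b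
    · intro n hn; exact ZMod.val_cast_of_lt (Finset.mem_range.mp hn)
    · intro b _; rfl
  rw [hsum]
  by_cases hx : x = 0
  · simp [hx, ec_zero]
  · rw [if_neg hx]
    have hz1 : ec N (2 * (x.val : ℤ)) ≠ 1 := by
      intro h
      obtain ⟨t, ht⟩ := (ec_eq_one_iff N _).mp h
      have hvt : (x.val : ℤ) = N * t := by
        have h2 : (2:ℤ) * (x.val:ℤ) = 2 * ((N:ℤ) * t) := by linarith [ht]
        exact mul_left_cancel₀ two_ne_zero h2
      have hlt : (x.val : ℤ) < N := by exact_mod_cast ZMod.val_lt x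
      have hge : (0 : ℤ) ≤ (x.val : ℤ) := by positivity
      have hN : (0:ℤ) < N := by exact_mod_cast Nat.pos_of_ne_zero (NeZero.ne N)
      have ht0 : t = 0 := by
        have h1 : t < 1 := by nlinarith
        have h2 : 0 ≤ t := by nlinarith
        omega
      rw [ht0, mul_zero] at hvt
      have hv0 : x.val = 0 := by exact_mod_cast hvt
      exact hx (by rwa [ZMod.val_eq_zero] at hv0)
    have hzN : (ec N (2 * (x.val : ℤ))) ^ N = 1 := by
      rw [ec, ← Complex.exp_nat_mul]
      have hN : (N : ℂ) ≠ 0 := Nat.cast_ne_zero.mpr (NeZero.ne N)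
      rw [show (N : ℂ) * (((2 * (x.val : ℤ) : ℤ) : ℂ) * (Real.pi:ℂ) * Complex.I / N)
          = ((x.val : ℤ) : ℂ) * (2 * (Real.pi:ℂ) * Complex.I) by
            push_cast; field_simp]
      exact Complex.exp_int_mul_two_pi_mul_I _
    rw [geom_sum_eq hz1, hzN, sub_self, zero_div]

/-- The full character-sum orthogonality over `(ZMod N)^g`. -/
lemma char_sum (g N : ℕ) [NeZero N] (q : Fin g → ZMod N) :
    ∑ a : Fin g → ZMod N, ec N (2 * dotZ (liftv a) (liftv q))
      = if q = 0 then ((N : ℂ) ^ g) else 0 := by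
  have step1 : ∀ a : Fin g → ZMod N, ec N (2 * dotZ (liftv a) (liftv q))
      = ∏ j, ec N (2 * ((a j).val : ℤ) * ((q j).val : ℤ)) := by
    intro a
    rw [show 2 * dotZ (liftv a) (liftv q) = ∑ j, 2 * ((a j).val : ℤ) * ((q j).val : ℤ) by
      rw [dotZ, Finset.mul_sum]; exact Finset.sum_congr rfl fun j _ => by simp [liftv]; ring]
    exact ec_sum N _ _
  simp only [step1]
  have key : (∏ j, ∑ b : ZMod N, ec N (2 * (b.val : ℤ) * ((q j).val : ℤ)))
      = ∑ a : Fin g → ZMod N, ∏ j, ec N (2 * ((a j).val : ℤ) * ((q j).val : ℤ)) := by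
    rw [Finset.prod_univ_sum, Fintype.piFinset_univ]
  rw [← key]
  have step2 : ∀ j, (∑ b : ZMod N, ec N (2 * (b.val : ℤ) * ((q j).val : ℤ)))
      = if q j = 0 then (N:ℂ) else 0 := fun j => char_sum_single N (q j)
  simp only [step2]
  by_cases hq : q = 0
  · simp [hq]
  · obtain ⟨j, hj⟩ : ∃ j, q j ≠ 0 := by
      by_contra hc
      push_neg at hc
      exact hq (funext hc)
    rw [if_neg hq]
    exact Finset.prod_eq_zero (Finset.mem_univ j) (if_neg hj)

end SvN

namespace SvN

open Complex

section Rep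

variable {g N : ℕ} [NeZero N] {hN : Even N}
variable {H : Type} [NormedAddCommGroup H] [InnerProductSpace ℂ H] [CompleteSpace H]
variable (ρ : (Heis g ⧸ GammaN g N hN) →* unitary (H →L[ℂ] H))

/-- The representation operator attached to an element of the integral Heisenberg group. -/
def Rop (a : Heis g) : H →L[ℂ] H := (ρ (QuotientGroup.mk a) : H →L[ℂ] H)

lemma Rop_mul (a b : Heis g) : Rop ρ (a * b) = Rop ρ a * Rop ρ b := by
  simp only [Rop, QuotientGroup.mk_mul, map_mul]
  rfl

lemma Rop_one : Rop ρ (1 : Heis g) = 1 := by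
  simp only [Rop, QuotientGroup.mk_one, map_one]
  rfl

lemma Rop_gamma {a : Heis g} (h : a ∈ GammaN g N hN) : Rop ρ a = 1 := by
  have h1 : (QuotientGroup.mk a : Heis g ⧸ GammaN g N hN) = 1 :=
    (QuotientGroup.eq_one_iff a).mpr h
  rw [Rop, h1, map_one]
  rfl

lemma Rop_inner (a : Heis g) (x y : H) :
    inner ℂ (Rop ρ a x) (Rop ρ a y) = inner ℂ x y := by
  have h : (star (Rop ρ a)) * (Rop ρ a) = 1 := Unitary.coe_star_mul_self (ρ (QuotientGroup.mk a))
  have h2 : ContinuousLinearMap.adjoint (Rop ρ a) ((Rop ρ a) y) = y := by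
    rw [← ContinuousLinearMap.star_eq_adjoint]
    calc (star (Rop ρ a)) ((Rop ρ a) y) = ((star (Rop ρ a)) * (Rop ρ a)) y := rfl
      _ = y := by rw [h]; rfl
  rw [← ContinuousLinearMap.adjoint_inner_right, h2]

lemma Rop_norm (a : Heis g) (x : H) : ‖Rop ρ a x‖ = ‖x‖ := by
  have h := Rop_inner ρ a x x
  have h1 : (‖Rop ρ a x‖ : ℝ) ^ 2 = ‖x‖ ^ 2 := by
    have e1 := inner_self_eq_norm_sq (𝕜 := ℂ) (Rop ρ a x)
    have e2 := inner_self_eq_norm_sq (𝕜 := ℂ) x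
    rw [h] at e1
    rw [e2] at e1
    exact_mod_cast e1.symm
  rw [← Real.sqrt_sq (norm_nonneg (Rop ρ a x)), ← Real.sqrt_sq (norm_nonneg x), h1]

/-- The central element `(0,0,m)`. -/
def czel (g : ℕ) (m : ℤ) : Heis g := (((0 : Fin g → ℤ), (0 : Fin g → ℤ)), m)

/-- Multiplying by a central element. -/
lemma central_mul (m : ℤ) (a : Heis g) :
    czel g m * a = ((a.1, m + a.2) : Heis g) := by
  rw [czel]
  refine Prod.ext ?_ ?_
  · show (0 : HVec g) + a.1 = a.1
    simp
  · show m + a.2 + symp g 0 a.1 = m + a.2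
    rw [symp_zero_left, add_zero]

variable (hcen : Rop ρ (czel g 1) = Complex.exp ((Real.pi : ℂ) * Complex.I / N) • 1)

include hcen

lemma Rop_central : ∀ m : ℤ,
    Rop ρ (czel g (m)) = ec N m • 1 := by
  have hone : Rop ρ (czel g ((1:ℤ)))
      = ec N 1 • 1 := by
    rw [hcen, ec]; norm_num
  have hnat : ∀ n : ℕ,
      Rop ρ (czel g ((n : ℤ)))
        = ec N (n : ℤ) • 1 := by
    intro n
    induction n with
    | zero =>
      have h0 : czel g (((0:ℕ) : ℤ))
          = (1 : Heis g) := rfl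
      rw [h0, Rop_one]
      norm_num [ec_zero]
    | succ n ih =>
      have hsplit : czel g (((n+1 : ℕ) : ℤ))
          = czel g ((n : ℤ))
            * czel g ((1 : ℤ)) := by
        rw [central_mul]
        refine Prod.ext rfl ?_
        show ((n+1 : ℕ) : ℤ) = (n : ℤ) + 1
        push_cast; ring
      rw [hsplit, Rop_mul ρ, ih, hone, smul_mul_assoc, one_mul, smul_smul, ← ec_add]
      norm_num
  intro m
  rcases le_or_gt 0 m with hm | hm
  · obtain ⟨n, rfl⟩ := Int.eq_ofNat_of_zero_le hm
    exact hnat n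
  · obtain ⟨n, hn⟩ : ∃ n : ℕ, m = -(n : ℤ) := ⟨m.natAbs, by omega⟩
    subst hn
    have hsplit : czel g ((-(n:ℤ)))
          * czel g (((n:ℕ) : ℤ))
          = (1 : Heis g) := by
      rw [central_mul]
      refine Prod.ext rfl ?_
      show -(n:ℤ) + (n:ℤ) = 0
      ring
    have h1 : Rop ρ (czel g ((-(n:ℤ))))
        * (ec N (n:ℤ) • 1) = 1 := by
      rw [← hnat n, ← Rop_mul ρ, hsplit, Rop_one]
    have hinv : ec N (n : ℤ) * ec N (-(n:ℤ)) = 1 := by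
      rw [← ec_add]
      norm_num [ec_zero]
    have hid : (ec N (n:ℤ) • (1 : H →L[ℂ] H)) * (ec N (-(n:ℤ)) • 1) = 1 := by
      rw [smul_mul_assoc, one_mul, smul_smul, hinv, one_smul]
    calc Rop ρ (czel g ((-(n:ℤ))))
        = Rop ρ (czel g ((-(n:ℤ)))) * 1 :=
          (mul_one _).symm
      _ = Rop ρ (czel g ((-(n:ℤ))))
            * ((ec N (n:ℤ) • 1) * (ec N (-(n:ℤ)) • 1)) := by rw [hid]
      _ = (Rop ρ (czel g ((-(n:ℤ))))
            * (ec N (n:ℤ) • 1)) * (ec N (-(n:ℤ)) • 1) := by rw [mul_assoc]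
      _ = 1 * (ec N (-(n:ℤ)) • 1) := by rw [h1]
      _ = ec N (-(n:ℤ)) • 1 := one_mul _

end Rep

end SvN

namespace SvN

open Complex

section Rep2

variable {g N : ℕ} [NeZero N] {hN : Even N}
variable {H : Type} [NormedAddCommGroup H] [InnerProductSpace ℂ H] [CompleteSpace H]
variable (ρ : (Heis g ⧸ GammaN g N hN) →* unitary (H →L[ℂ] H))

/-- The translation-part element `(p,0,0)`. -/
def sel (g : ℕ) (p : Fin g → ℤ) : Heis g := ((p, (0 : Fin g → ℤ)), 0)
/-- The modulation-part element `(0,q,0)`. -/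
def tel (g : ℕ) (q : Fin g → ℤ) : Heis g := (((0 : Fin g → ℤ), q), 0)

/-- The operator `S_p`. -/
def Sop (p : Fin g → ℤ) : H →L[ℂ] H := Rop ρ (sel g p)
/-- The operator `T_q`. -/
def Top (q : Fin g → ℤ) : H →L[ℂ] H := Rop ρ (tel g q)

lemma sel_mul (p p' : Fin g → ℤ) : sel g p * sel g p' = sel g (p + p') := by
  rw [Heis.mul_def, sel, sel, sel]
  refine Prod.ext rfl ?_
  show (0:ℤ) + 0 + symp g (p, 0) (p', 0) = 0
  simp [symp]

lemma tel_mul (q q' : Fin g → ℤ) : tel g q * tel g q' = tel g (q + q') := by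
  rw [Heis.mul_def, tel, tel, tel]
  refine Prod.ext rfl ?_
  show (0:ℤ) + 0 + symp g ((0 : Fin g → ℤ), q) ((0 : Fin g → ℤ), q') = 0
  simp [symp]

lemma Sop_mul (p p' : Fin g → ℤ) : Sop ρ p * Sop ρ p' = Sop ρ (p + p') := by
  rw [Sop, Sop, Sop, ← Rop_mul, sel_mul]

lemma Top_mul (q q' : Fin g → ℤ) : Top ρ q * Top ρ q' = Top ρ (q + q') := by
  rw [Top, Top, Top, ← Rop_mul, tel_mul]

lemma Sop_zero : Sop ρ (0 : Fin g → ℤ) = 1 := by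
  have : sel g (0 : Fin g → ℤ) = 1 := rfl
  rw [Sop, this, Rop_one]

lemma Top_zero : Top ρ (0 : Fin g → ℤ) = 1 := by
  have : tel g (0 : Fin g → ℤ) = 1 := rfl
  rw [Top, this, Rop_one]

/-- `S` only depends on `p` modulo `N`. -/
lemma Sop_congr {p p' : Fin g → ℤ} (h : ∀ j, ((p j : ZMod N)) = (p' j : ZMod N)) :
    Sop (hN := hN) ρ p = Sop ρ p' := by
  have hdvd : ∀ j, (N : ℤ) ∣ (p j - p' j) := by
    intro j
    rw [← ZMod.intCast_zmod_eq_zero_iff_dvd, Int.cast_sub, sub_eq_zero]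
    exact h j
  have hmem : sel g (p - p') ∈ GammaN g N hN := by
    refine ⟨⟨(fun j => (p j - p' j) / N, 0), ?_⟩, 0, by simp [sel]⟩
    show ((p - p'), (0 : Fin g → ℤ)) = (N : ℤ) • ((fun j => (p j - p' j) / N), (0 : Fin g → ℤ))
    refine Prod.ext ?_ ?_
    · funext j
      show p j - p' j = (N : ℤ) * ((p j - p' j) / N)
      exact (Int.mul_ediv_cancel' (hdvd j)).symm
    · show (0 : Fin g → ℤ) = (N : ℤ) • (0 : Fin g → ℤ)
      simp
  have h1 : Sop (hN := hN) ρ (p - p') = 1 := Rop_gamma ρ hmem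
  have h2 : Sop (hN := hN) ρ (p - p') * Sop ρ p' = Sop ρ p := by
    rw [Sop_mul]
    congr 1
    funext j
    simp
  rw [← h2, h1, one_mul]

/-- `T` only depends on `q` modulo `N`. -/
lemma Top_congr {q q' : Fin g → ℤ} (h : ∀ j, ((q j : ZMod N)) = (q' j : ZMod N)) :
    Top (hN := hN) ρ q = Top ρ q' := by
  have hdvd : ∀ j, (N : ℤ) ∣ (q j - q' j) := by
    intro j
    rw [← ZMod.intCast_zmod_eq_zero_iff_dvd, Int.cast_sub, sub_eq_zero]
    exact h j
  have hmem : tel g (q - q') ∈ GammaN g N hN := by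
    refine ⟨⟨(0, fun j => (q j - q' j) / N), ?_⟩, 0, by simp [tel]⟩
    show ((0 : Fin g → ℤ), (q - q')) = (N : ℤ) • ((0 : Fin g → ℤ), (fun j => (q j - q' j) / N))
    refine Prod.ext ?_ ?_
    · show (0 : Fin g → ℤ) = (N : ℤ) • (0 : Fin g → ℤ)
      simp
    · funext j
      show q j - q' j = (N : ℤ) * ((q j - q' j) / N)
      exact (Int.mul_ediv_cancel' (hdvd j)).symm
  have h1 : Top (hN := hN) ρ (q - q') = 1 := Rop_gamma ρ hmem
  have h2 : Top (hN := hN) ρ (q - q') * Top ρ q' = Top ρ q := by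
    rw [Top_mul]
    congr 1
    funext j
    simp
  rw [← h2, h1, one_mul]

variable (hcen : Rop ρ (czel g 1) = Complex.exp ((Real.pi : ℂ) * Complex.I / N) • 1)

include hcen

/-- The fundamental commutation relation `T_q S_p = e^{-2πi p·q/N} S_p T_q`. -/
lemma Top_Sop_comm (p q : Fin g → ℤ) :
    Top (hN := hN) ρ q * Sop ρ p = ec N (-2 * dotZ p q) • (Sop ρ p * Top ρ q) := by
  have hsymp1 : symp g ((0 : Fin g → ℤ), q) (p, (0 : Fin g → ℤ)) = - dotZ p q := by
    rw [symp, dotZ, ← Finset.sum_neg_distrib]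
    exact Finset.sum_congr rfl fun j _ => by show (0 : ℤ) * 0 - q j * p j = -(p j * q j); ring
  have hsymp2 : symp g (p, (0 : Fin g → ℤ)) ((0 : Fin g → ℤ), q) = dotZ p q := by
    rw [symp, dotZ]
    exact Finset.sum_congr rfl fun j _ => by show p j * q j - 0 * 0 = p j * q j; ring
  have h1 : tel g q * sel g p = czel g (-2 * dotZ p q) * (sel g p * tel g q) := by
    rw [central_mul, Heis.mul_def, Heis.mul_def, tel, sel]
    refine Prod.ext ?_ ?_
    · show ((0 : Fin g → ℤ) + p, q + 0) = (p + 0, (0 : Fin g → ℤ) + q)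
      refine Prod.ext ?_ ?_ <;> funext j <;> simp
    · show (0:ℤ) + 0 + symp g ((0 : Fin g → ℤ), q) (p, (0 : Fin g → ℤ))
        = -2 * dotZ p q + ((0:ℤ) + 0 + symp g (p, (0 : Fin g → ℤ)) ((0 : Fin g → ℤ), q))
      rw [hsymp1, hsymp2]
      ring
  rw [Top, Sop, ← Rop_mul, h1, Rop_mul, Rop_mul, Rop_central ρ hcen, smul_mul_assoc, one_mul,
    ← Sop, ← Top]

end Rep2

end SvN

namespace SvN

open Complex

lemma symp_tel_sel {g : ℕ} (p q : Fin g → ℤ) :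
    symp g ((0 : Fin g → ℤ), q) (p, (0 : Fin g → ℤ)) = - dotZ p q := by
  rw [symp, dotZ, ← Finset.sum_neg_distrib]
  exact Finset.sum_congr rfl fun j _ => by show (0 : ℤ) * 0 - q j * p j = -(p j * q j); ring

section Rep3

variable {g N : ℕ} [NeZero N] {hN : Even N}
variable {H : Type} [NormedAddCommGroup H] [InnerProductSpace ℂ H] [CompleteSpace H]
variable (ρ : (Heis g ⧸ GammaN g N hN) →* unitary (H →L[ℂ] H))

/-- The spectral projection attached to the character `a` of the commuting family `T`. -/
def Pa (a : Fin g → ZMod N) : H →L[ℂ] H :=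
  ((N : ℂ) ^ g)⁻¹ • ∑ q : Fin g → ZMod N, ec N (2 * dotZ (liftv a) (liftv q)) • Top ρ (liftv q)

lemma Pa_sum : ∑ a : Fin g → ZMod N, Pa ρ a = 1 := by
  have hNg : ((N : ℂ) ^ g) ≠ 0 := pow_ne_zero _ (Nat.cast_ne_zero.mpr (NeZero.ne N))
  simp only [Pa]
  rw [← Finset.smul_sum, Finset.sum_comm]
  have hq : ∀ q : Fin g → ZMod N,
      (∑ a : Fin g → ZMod N, ec N (2 * dotZ (liftv a) (liftv q)) • Top (hN := hN) ρ (liftv q))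
        = (if q = 0 then ((N : ℂ) ^ g) else 0) • Top ρ (liftv q) := by
    intro q
    rw [← Finset.sum_smul, char_sum]
  simp only [hq]
  rw [Finset.sum_eq_single (0 : Fin g → ZMod N)]
  · rw [if_pos rfl, liftv_zero, Top_zero, smul_smul, inv_mul_cancel₀ hNg, one_smul]
  · intro b _ hb
    rw [if_neg hb, zero_smul]
  · intro h0
    exact absurd (Finset.mem_univ _) h0

lemma Pa_zero_eq : Pa (hN := hN) ρ 0 = ((N : ℂ) ^ g)⁻¹ • ∑ q : Fin g → ZMod N, Top ρ (liftv q) := by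
  simp only [Pa, liftv_zero]
  congr 1
  refine Finset.sum_congr rfl fun q _ => ?_
  have : dotZ (0 : Fin g → ℤ) (liftv q) = 0 := by
    simp [dotZ]
  rw [this, mul_zero, ec_zero, one_smul]

variable (hcen : Rop ρ (czel g 1) = Complex.exp ((Real.pi : ℂ) * Complex.I / N) • 1)

include hcen

lemma Pa_mul_S (a : Fin g → ZMod N) (p : Fin g → ℤ) :
    Pa ρ a * Sop ρ p = Sop ρ p * Pa ρ (a - castv N p) := by
  simp only [Pa]
  rw [smul_mul_assoc, mul_smul_comm]
  congr 1
  rw [Finset.sum_mul, Finset.mul_sum]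
  refine Finset.sum_congr rfl fun q _ => ?_
  rw [smul_mul_assoc, Top_Sop_comm ρ hcen, smul_smul, ← ec_add, mul_smul_comm]
  congr 1
  have h2 : 2 * dotZ (liftv a) (liftv q) + -2 * dotZ p (liftv q)
      = 2 * (dotZ (liftv a) (liftv q) - dotZ p (liftv q)) := by ring
  rw [h2]
  apply ec_two_congr
  push_cast [dotZ]
  simp only [cast_liftv, Pi.sub_apply]
  rw [← Finset.sum_sub_distrib]
  refine Finset.sum_congr rfl fun j _ => ?_
  simp only [castv, Pi.sub_apply]
  ring

omit hcen in
lemma Sop_neg_cancel (p : Fin g → ℤ) : Sop (hN := hN) ρ p * Sop ρ (-p) = 1 := by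
  rw [Sop_mul]
  have : p + -p = 0 := by funext j; simp
  rw [this, Sop_zero]

lemma Pa_zero_ne_zero [Nontrivial H] : Pa (hN := hN) ρ 0 ≠ 0 := by
  have hone : (1 : H →L[ℂ] H) ≠ 0 := by
    obtain ⟨x, hx⟩ := exists_ne (0 : H)
    intro h
    have hx1 : (1 : H →L[ℂ] H) x = x := rfl
    rw [h] at hx1
    exact hx (by simpa using hx1.symm)
  obtain ⟨a, ha⟩ : ∃ a : Fin g → ZMod N, Pa (hN := hN) ρ a ≠ 0 := by
    by_contra hc
    push_neg at hc
    have : ∑ a : Fin g → ZMod N, Pa (hN := hN) ρ a = 0 := Finset.sum_eq_zero fun a _ => hc a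
    rw [Pa_sum] at this
    exact hone this
  intro h0
  apply ha
  have hrel := Pa_mul_S ρ hcen a (liftv a)
  rw [castv_liftv, sub_self, h0, mul_zero] at hrel
  have := congrArg (fun A => A * Sop (hN := hN) ρ (-(liftv a))) hrel
  simp only [zero_mul, mul_assoc] at this
  rw [Sop_neg_cancel ρ, mul_one] at this
  exact this

lemma Top_mul_Pa_zero (q₀ : Fin g → ℤ) :
    Top (hN := hN) ρ q₀ * Pa ρ 0 = Pa ρ 0 := by
  rw [Pa_zero_eq, mul_smul_comm, Finset.mul_sum]
  congr 1
  have hterm : ∀ q : Fin g → ZMod N,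
      Top (hN := hN) ρ q₀ * Top ρ (liftv q) = Top ρ (liftv (castv N q₀ + q)) := by
    intro q
    rw [Top_mul]
    apply Top_congr
    intro j
    rw [cast_liftv]
    show (((q₀ + liftv q) j : ℤ) : ZMod N) = (castv N q₀ + q) j
    rw [Pi.add_apply, Pi.add_apply, Int.cast_add, cast_liftv]
    rfl
  simp only [hterm]
  exact Fintype.sum_equiv (Equiv.addLeft (castv N q₀)) _ _ fun q => rfl

end Rep3

end SvN

namespace SvN

open Complex

section Rep4

variable {g N : ℕ} [NeZero N] {hN : Even N}
variable {H : Type} [NormedAddCommGroup H] [InnerProductSpace ℂ H] [CompleteSpace H]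
variable (ρ : (Heis g ⧸ GammaN g N hN) →* unitary (H →L[ℂ] H))

/-- The candidate orthonormal basis vectors `v_μ := S_μ v₀`. -/
def vvec (v₀ : H) (μ : Fin g → ZMod N) : H := Sop ρ (liftv μ) v₀

lemma Sop_vvec (v₀ : H) (p : Fin g → ℤ) (μ : Fin g → ZMod N) :
    Sop (hN := hN) ρ p (vvec ρ v₀ μ) = vvec ρ v₀ (μ + castv N p) := by
  have h1 : Sop (hN := hN) ρ p (Sop ρ (liftv μ) v₀) = (Sop ρ p * Sop ρ (liftv μ)) v₀ := rfl
  rw [vvec, h1, Sop_mul]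
  rw [show Sop (hN := hN) ρ (p + liftv μ) = Sop ρ (liftv (μ + castv N p)) from
    Sop_congr ρ fun j => by
      rw [cast_liftv]
      show (((p + liftv μ) j : ℤ) : ZMod N) = (μ + castv N p) j
      rw [Pi.add_apply, Pi.add_apply, Int.cast_add, cast_liftv]
      show ((p j : ℤ) : ZMod N) + μ j = μ j + castv N p j
      rw [add_comm]
      rfl]
  rfl

variable (hcen : Rop ρ (czel g 1) = Complex.exp ((Real.pi : ℂ) * Complex.I / N) • 1)
include hcen

lemma Top_vvec (v₀ : H) (hv : ∀ q : Fin g → ℤ, Top (hN := hN) ρ q v₀ = v₀)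
    (q : Fin g → ℤ) (μ : Fin g → ZMod N) :
    Top (hN := hN) ρ q (vvec ρ v₀ μ) = ec N (-2 * dotZ (liftv μ) q) • vvec ρ v₀ μ := by
  have h1 : Top (hN := hN) ρ q (Sop ρ (liftv μ) v₀) = (Top ρ q * Sop ρ (liftv μ)) v₀ := rfl
  rw [vvec, h1, Top_Sop_comm ρ hcen]
  have h2 : ((Sop (hN := hN) ρ (liftv μ) * Top ρ q) : H →L[ℂ] H) v₀
      = Sop ρ (liftv μ) (Top ρ q v₀) := rfl
  rw [ContinuousLinearMap.smul_apply, h2, hv q]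

/-- Action of a general group element on the basis vectors. -/
lemma Rop_vvec (v₀ : H) (hv : ∀ q : Fin g → ℤ, Top (hN := hN) ρ q v₀ = v₀)
    (p q : Fin g → ℤ) (k : ℤ) (μ : Fin g → ZMod N) :
    Rop ρ (((p, q), k) : Heis g) (vvec ρ v₀ μ)
      = (ec N (k + dotZ p q) * ec N (-2 * dotZ (liftv (μ + castv N p)) q))
          • vvec ρ v₀ (μ + castv N p) := by
  have hdec : ((((p, q), k) : Heis g)) = czel g (k + dotZ p q) * (tel g q * sel g p) := by
    rw [central_mul, Heis.mul_def, tel, sel]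
    refine Prod.ext ?_ ?_
    · show (p, q) = ((0 : Fin g → ℤ) + p, q + 0)
      refine Prod.ext ?_ ?_ <;> funext j <;> simp
    · show k = k + dotZ p q + ((0:ℤ) + 0 + symp g ((0 : Fin g → ℤ), q) (p, (0 : Fin g → ℤ)))
      rw [symp_tel_sel]
      ring
  rw [hdec, Rop_mul, Rop_mul, Rop_central ρ hcen, smul_mul_assoc, one_mul, ← Top, ← Sop]
  rw [ContinuousLinearMap.smul_apply]
  have h1 : ((Top (hN := hN) ρ q * Sop ρ p) : H →L[ℂ] H) (vvec ρ v₀ μ)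
      = Top ρ q (Sop ρ p (vvec ρ v₀ μ)) := rfl
  rw [h1, Sop_vvec, Top_vvec ρ hcen v₀ hv, smul_smul]

/-- Orthonormality of the family `v_μ`. -/
lemma vvec_orthonormal (v₀ : H) (hv : ∀ q : Fin g → ℤ, Top (hN := hN) ρ q v₀ = v₀)
    (hnorm : ‖v₀‖ = 1) : Orthonormal ℂ (vvec (hN := hN) ρ v₀) := by
  rw [orthonormal_iff_ite]
  intro μ ν
  by_cases hμν : μ = ν
  · subst hμν
    rw [if_pos rfl]
    have h1 : ‖vvec (hN := hN) ρ v₀ μ‖ = 1 := by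
      rw [vvec, Sop, Rop_norm, hnorm]
    rw [inner_self_eq_norm_sq_to_K, h1]
    norm_num
  · rw [if_neg hμν]
    obtain ⟨j, hj⟩ : ∃ j, μ j ≠ ν j := by
      by_contra hc
      push_neg at hc
      exact hμν (funext hc)
    set q : Fin g → ℤ := Pi.single j 1 with hq
    have hdot : ∀ κ : Fin g → ZMod N, dotZ (liftv κ) q = ((κ j).val : ℤ) := by
      intro κ
      rw [dotZ, hq]
      rw [Finset.sum_eq_single j]
      · simp [liftv]
      · intro b _ hb
        simp [Pi.single_apply, hb]
      · intro hj'
        exact absurd (Finset.mem_univ _) hj'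
    have hinner := Rop_inner ρ (tel g q) (vvec ρ v₀ μ) (vvec ρ v₀ ν)
    rw [show Rop ρ (tel g q) = Top (hN := hN) ρ q from rfl] at hinner
    rw [Top_vvec ρ hcen v₀ hv, Top_vvec ρ hcen v₀ hv, inner_smul_left, inner_smul_right,
      ec_conj, hdot, hdot] at hinner
    -- hinner : ec N (-(-2 μval)) * (ec N (-2 νval) * inner (vvec μ) (vvec ν)) = inner ...
    set z : ℂ := inner ℂ (vvec (hN := hN) ρ v₀ μ) (vvec ρ v₀ ν) with hz
    have hfac : ec N (2 * ((μ j).val : ℤ)) * ec N (-2 * ((ν j).val : ℤ)) ≠ 1 := by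
      rw [← ec_add]
      intro hone
      obtain ⟨t, ht⟩ := (ec_eq_one_iff N _).mp hone
      have hvt : ((μ j).val : ℤ) - ((ν j).val : ℤ) = N * t := by linarith [ht]
      have hltμ : ((μ j).val : ℤ) < N := by exact_mod_cast ZMod.val_lt (μ j)
      have hltν : ((ν j).val : ℤ) < N := by exact_mod_cast ZMod.val_lt (ν j)
      have hgeμ : (0 : ℤ) ≤ ((μ j).val : ℤ) := by positivity
      have hgeν : (0 : ℤ) ≤ ((ν j).val : ℤ) := by positivity
      have hN : (0:ℤ) < N := by exact_mod_cast Nat.pos_of_ne_zero (NeZero.ne N)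
      have ht0 : t = 0 := by
        have h1 : t < 1 := by nlinarith
        have h2 : -1 < t := by nlinarith
        omega
      rw [ht0, mul_zero] at hvt
      have hval : (μ j).val = (ν j).val := by omega
      apply hj
      rw [← ZMod.natCast_rightInverse (μ j), ← ZMod.natCast_rightInverse (ν j), hval]
    have hneg : (-(-2 * (((μ j).val : ℕ) : ℤ))) = 2 * (((μ j).val : ℕ) : ℤ) := by ring
    rw [hneg, ← mul_assoc] at hinner
    by_contra hzne
    exact hfac ((mul_left_eq_self₀.mp hinner).resolve_right hzne)

end Rep4

end SvN

open SvN

/-- **Stone–von Neumann theorem for the finite Heisenberg group.**  Any irreducible unitary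
representation of `H(ℤ_N^g)` in which the central element `(0,0,1)` acts as multiplication by
`e^{πi/N}` is unitarily equivalent to the Schrödinger representation
`(p,q,k) ↦ e^{kπi/N} O_{pq}`. -/
theorem stmt_2 (g N : ℕ) [NeZero N] (hN : Even N)
    (H : Type) [NormedAddCommGroup H] [InnerProductSpace ℂ H] [CompleteSpace H] [Nontrivial H]
    (ρ : (Heis g ⧸ GammaN g N hN) →* unitary (H →L[ℂ] H))
    (hcen : ((ρ (QuotientGroup.mk (((0 : Fin g → ℤ), (0 : Fin g → ℤ)), (1 : ℤ))) :
        H →L[ℂ] H)) = Complex.exp ((Real.pi : ℂ) * Complex.I / N) • 1)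
    (hirr : ∀ W : Submodule ℂ H, IsClosed (W : Set H) →
        (∀ (u : Heis g ⧸ GammaN g N hN) (x : H), x ∈ W → (ρ u : H →L[ℂ] H) x ∈ W) →
        W = ⊥ ∨ W = ⊤) :
    ∃ U : H ≃ₗᵢ[ℂ] ThetaSp g N,
      ∀ (p q : Fin g → ℤ) (k : ℤ) (x : H),
        U ((ρ (QuotientGroup.mk ((p, q), k)) : H →L[ℂ] H) x)
          = Complex.exp ((k : ℂ) * (Real.pi : ℂ) * Complex.I / N) • Opq g N p q (U x) := by
  classical
  have hcen' : Rop ρ (czel g 1) = Complex.exp ((Real.pi : ℂ) * Complex.I / N) • 1 := hcen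
  -- a vector fixed by all the `T_q`
  have hP0 : Pa (hN := hN) ρ 0 ≠ 0 := Pa_zero_ne_zero ρ hcen'
  obtain ⟨x₀, hx₀⟩ : ∃ x : H, Pa (hN := hN) ρ 0 x ≠ 0 := by
    by_contra hc
    push_neg at hc
    exact hP0 (ContinuousLinearMap.ext fun x => by simpa using hc x)
  set u : H := Pa (hN := hN) ρ 0 x₀ with hu
  have hTu : ∀ q : Fin g → ℤ, Top (hN := hN) ρ q u = u := by
    intro q
    have h1 := congrArg (fun A : H →L[ℂ] H => A x₀) (Top_mul_Pa_zero ρ hcen' q)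
    simpa [ContinuousLinearMap.mul_apply] using h1
  have hnu : ‖u‖ ≠ 0 := fun h => hx₀ (norm_eq_zero.mp h)
  set v₀ : H := ((‖u‖⁻¹ : ℝ) : ℂ) • u with hv₀
  have hnorm : ‖v₀‖ = 1 := by
    rw [hv₀, norm_smul, Complex.norm_real, Real.norm_eq_abs,
      abs_of_nonneg (inv_nonneg.mpr (norm_nonneg u)), inv_mul_cancel₀ hnu]
  have hTv : ∀ q : Fin g → ℤ, Top (hN := hN) ρ q v₀ = v₀ := by
    intro q
    rw [hv₀, map_smul, hTu]
  -- the orthonormal family and its span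
  have hon : Orthonormal ℂ (vvec (hN := hN) ρ v₀) := vvec_orthonormal ρ hcen' v₀ hTv hnorm
  set W : Submodule ℂ H := Submodule.span ℂ (Set.range (vvec (hN := hN) ρ v₀)) with hW
  haveI : FiniteDimensional ℂ W := FiniteDimensional.span_of_finite ℂ (Set.finite_range _)
  have hWclosed : IsClosed (W : Set H) := Submodule.closed_of_finiteDimensional W
  have hWinv : ∀ (u' : Heis g ⧸ GammaN g N hN) (x : H), x ∈ W → (ρ u' : H →L[ℂ] H) x ∈ W := by
    intro u' x hx
    obtain ⟨a, rfl⟩ := QuotientGroup.mk_surjective u'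
    obtain ⟨⟨p, q⟩, k⟩ := a
    have hmap : ∀ μ, Rop ρ (((p, q), k) : Heis g) (vvec (hN := hN) ρ v₀ μ) ∈ W := by
      intro μ
      rw [Rop_vvec ρ hcen' v₀ hTv]
      exact Submodule.smul_mem _ _ (Submodule.subset_span ⟨_, rfl⟩)
    have hRx : ∀ y ∈ W, Rop ρ (((p, q), k) : Heis g) y ∈ W := by
      intro y hy
      refine Submodule.span_induction ?_ ?_ ?_ ?_ hy
      · rintro z ⟨μ, rfl⟩
        exact hmap μ
      · rw [map_zero]
        exact W.zero_mem
      · intro z w _ _ hz hw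
        rw [map_add]
        exact W.add_mem hz hw
      · intro c z _ hz
        rw [map_smul]
        exact W.smul_mem c hz
    exact hRx x hx
  have hWne : W ≠ ⊥ := by
    intro hbot
    have h0 : vvec (hN := hN) ρ v₀ 0 ∈ W := Submodule.subset_span ⟨0, rfl⟩
    rw [hbot, Submodule.mem_bot] at h0
    exact hon.ne_zero 0 h0
  have hWtop : W = ⊤ := (hirr W hWclosed hWinv).resolve_left hWne
  -- the orthonormal basis and the unitary map
  have hsp : ⊤ ≤ Submodule.span ℂ (Set.range (vvec (hN := hN) ρ v₀)) := by
    rw [← hW]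
    exact hWtop.ge
  let b : OrthonormalBasis (Fin g → ZMod N) ℂ H := OrthonormalBasis.mk hon hsp
  refine ⟨b.repr, ?_⟩
  intro p q k x
  have hb : ∀ ν, b.repr (vvec (hN := hN) ρ v₀ ν) = EuclideanSpace.single ν 1 := by
    intro ν
    have hbv : b ν = vvec (hN := hN) ρ v₀ ν := by
      rw [show ⇑b = vvec (hN := hN) ρ v₀ from OrthonormalBasis.coe_mk hon hsp]
    rw [← hbv, OrthonormalBasis.repr_self]
  have hOpq : ∀ μ : Fin g → ZMod N, Opq g N p q (EuclideanSpace.single μ 1)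
      = schCoeff g N p q μ • EuclideanSpace.single (μ + castv N p) 1 := by
    intro μ
    have hθ : (thetaBasis g N) μ = EuclideanSpace.single μ (1 : ℂ) := by
      rw [thetaBasis, OrthonormalBasis.coe_toBasis, EuclideanSpace.basisFun_apply]
    rw [Opq, LinearMap.coe_toContinuousLinearMap', ← hθ, Module.Basis.constr_basis]
    rfl
  -- the scalar identity
  have hscal : ∀ μ : Fin g → ZMod N,
      ec N (k + dotZ p q) * ec N (-2 * dotZ (liftv (μ + castv N p)) q)
        = Complex.exp ((k : ℂ) * (Real.pi : ℂ) * Complex.I / N) * schCoeff g N p q μ := by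
    intro μ
    have hNC : (N : ℂ) ≠ 0 := Nat.cast_ne_zero.mpr (NeZero.ne N)
    have hcongr : ((dotZ (liftv (μ + castv N p)) q : ℤ) : ZMod N)
        = ((dotZ (liftv μ) q + dotZ p q : ℤ) : ZMod N) := by
      push_cast [dotZ]
      simp only [cast_liftv]
      rw [← Finset.sum_add_distrib]
      refine Finset.sum_congr rfl fun j _ => ?_
      rw [Pi.add_apply]
      show (μ j + castv N p j) * ((q j : ℤ) : ZMod N)
        = μ j * ((q j : ℤ) : ZMod N) + ((p j : ℤ) : ZMod N) * ((q j : ℤ) : ZMod N)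
      rw [show castv N p j = ((p j : ℤ) : ZMod N) from rfl]
      ring
    obtain ⟨t, ht⟩ : ∃ t : ℤ, dotZ (liftv (μ + castv N p)) q
        = dotZ (liftv μ) q + dotZ p q + N * t := by
      have hdvd : (N : ℤ) ∣ (dotZ (liftv (μ + castv N p)) q - (dotZ (liftv μ) q + dotZ p q)) := by
        rw [← ZMod.intCast_zmod_eq_zero_iff_dvd, Int.cast_sub, sub_eq_zero]
        exact_mod_cast hcongr
      obtain ⟨t, ht⟩ := hdvd
      exact ⟨t, by linarith [ht]⟩
    have hsch : Complex.exp ((k : ℂ) * (Real.pi : ℂ) * Complex.I / N) * schCoeff g N p q μ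
        = ec N (k - dotZ p q - 2 * dotZ (liftv μ) q) := by
      rw [schCoeff, ec, ← Complex.exp_add]
      congr 1
      have hs1 : (∑ j, (p j : ℂ) * (q j : ℂ)) = ((dotZ p q : ℤ) : ℂ) := by
        push_cast [dotZ]
        rfl
      have hs2 : (∑ j, (((μ j).val : ℕ) : ℂ) * (q j : ℂ)) = ((dotZ (liftv μ) q : ℤ) : ℂ) := by
        push_cast [dotZ, liftv]
        rfl
      rw [hs1, hs2]
      push_cast
      field_simp
      ring
    rw [← ec_add, hsch]
    have harg : k + dotZ p q + -2 * dotZ (liftv (μ + castv N p)) q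
        = (k - dotZ p q - 2 * dotZ (liftv μ) q) + 2 * N * (-2 * t) + 2 * N * t := by
      rw [ht]; ring
    rw [harg, ec_add, ec_add, ec_twoN, ec_twoN, mul_one, mul_one]
  -- the statement holds on each basis vector
  have hbasis : ∀ μ : Fin g → ZMod N,
      b.repr ((ρ (QuotientGroup.mk ((p, q), k)) : H →L[ℂ] H) (vvec (hN := hN) ρ v₀ μ))
        = Complex.exp ((k : ℂ) * (Real.pi : ℂ) * Complex.I / N)
            • Opq g N p q (b.repr (vvec (hN := hN) ρ v₀ μ)) := by
    intro μ
    rw [show (ρ (QuotientGroup.mk ((p, q), k)) : H →L[ℂ] H) = Rop ρ (((p, q), k) : Heis g)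
      from rfl]
    rw [Rop_vvec ρ hcen' v₀ hTv, map_smul, hb, hb, hOpq, smul_smul, hscal]
  -- extend to all of `H` by linearity
  have hx : x ∈ W := by
    rw [hWtop]
    trivial
  refine Submodule.span_induction ?_ ?_ ?_ ?_ hx
  · rintro y ⟨μ, rfl⟩
    exact hbasis μ
  · simp only [map_zero, smul_zero]
  · intro y z _ _ hy hz
    simp only [map_add, hy, hz, smul_add]
  · intro c y _ hy
    simp only [map_smul, hy]
    rw [smul_comm]
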